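/- Let I be a maximal ideal on ℕ. Then I-statistical convergence does not coincide with statistical convergence; equivalently, the ideal J(I,λ) := {A ⊆ ℕ : λ_n(A) →_I 0} is different from the density zero ideal Z. -/

import Mathlib

open Filter Set Topology

/-- `λ_n(A) = |A ∩ [1,n]| / n`. -/
noncomputable def lam (n : ℕ) (A : Set ℕ) : ℝ :=
  ((A ∩ Set.Icc 1 n).ncard : ℝ) / n

/-- The density zero ideal `Z = {A ⊆ ℕ : lim_n λ_n(A) = 0}`. -/
def Zstat : Set (Set ℕ) :=
  {A : Set ℕ | Tendsto (fun n => lam n A) atTop (nhds 0)}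

/-- A (possibly improper) ideal on ℕ: contains all finite sets, closed under
subsets and finite unions. -/
def IsIdeal (I : Set (Set ℕ)) : Prop :=
  (∀ A : Set ℕ, A.Finite → A ∈ I) ∧
    (∀ ⦃A B : Set ℕ⦄, A ⊆ B → B ∈ I → A ∈ I) ∧
    (∀ ⦃A B : Set ℕ⦄, A ∈ I → B ∈ I → A ∪ B ∈ I)

/-- A proper ideal on ℕ. -/
def IsProperIdeal (I : Set (Set ℕ)) : Prop :=
  IsIdeal I ∧ (Set.univ : Set ℕ) ∉ I

/-- `I`-statistical convergence of a sequence `x` to `l`: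
`{n : λ_n({k : x_k ∉ U}) ≥ ε} ∈ I` for every neighborhood `U` of `l` and `ε > 0`. -/
def IStatConv (I : Set (Set ℕ)) {X : Type*} [TopologicalSpace X]
    (x : ℕ → X) (l : X) : Prop :=
  ∀ U ∈ nhds l, ∀ ε : ℝ, 0 < ε → {n : ℕ | ε ≤ lam n {k : ℕ | x k ∉ U}} ∈ I

/-- `J(I,λ) = {A ⊆ ℕ : λ_n(A) →_I 0}`. -/
def Jlam (I : Set (Set ℕ)) : Set (Set ℕ) :=
  {A : Set ℕ | ∀ ε : ℝ, 0 < ε → {n : ℕ | ε ≤ lam n A} ∈ I}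

/-! ### Auxiliary constructions -/

/-- A rapidly growing sequence: `cc j = 4 ^ (j*j)`. -/
def cc (j : ℕ) : ℕ := 4 ^ (j * j)

lemma cc_strictMono : StrictMono cc := fun a b h =>
  Nat.pow_lt_pow_right (by norm_num) (by nlinarith)

lemma cc_mono : Monotone cc := cc_strictMono.monotone

lemma one_le_cc (j : ℕ) : 1 ≤ cc j := Nat.one_le_pow _ _ (by norm_num)

lemma lt_cc (j : ℕ) : j < cc j := by
  calc j < 2 ^ j := Nat.lt_two_pow_self
  _ ≤ 4 ^ (j * j) := by
      calc (2:ℕ) ^ j ≤ 2 ^ (2 * (j * j)) :=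
            Nat.pow_le_pow_right (by norm_num) (by nlinarith)
      _ = 4 ^ (j * j) := by rw [pow_mul]; norm_num

lemma cc_zero : cc 0 = 1 := by simp [cc]

/-- Every `n ≥ 1` lies in a block `[cc j, cc (j+1))`. -/
lemma exists_block (n : ℕ) (hn : 1 ≤ n) : ∃ j, cc j ≤ n ∧ n < cc (j + 1) := by
  set j := Nat.findGreatest (fun j => cc j ≤ n) n with hj
  have h0 : cc 0 ≤ n := by simpa [cc_zero] using hn
  have hspec : cc j ≤ n :=
    Nat.findGreatest_spec (P := fun j => cc j ≤ n) (m := 0) (Nat.zero_le _) h0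
  refine ⟨j, hspec, ?_⟩
  by_contra h
  push_neg at h
  have hjn : j + 1 ≤ n := le_trans (le_of_lt (lt_cc (j+1))) h
  have := Nat.le_findGreatest (P := fun j => cc j ≤ n) hjn h
  omega

/-- The union of the blocks with index of parity `p`. -/
def Gset (p : ℕ) : Set ℕ :=
  {n | ∃ j, j % 2 = p ∧ cc j ≤ n ∧ n < cc (j + 1)}

/-- The witnessing set: union of `(cc j, 2 * cc j]` over `j` of parity `p`. -/
def Aset (p : ℕ) : Set ℕ :=
  {x | ∃ j, j % 2 = p ∧ cc j < x ∧ x ≤ 2 * cc j}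

lemma block_unique {j k n : ℕ} (h1 : cc j ≤ n) (h2 : n < cc (j+1))
    (h3 : cc k ≤ n) (h4 : n < cc (k+1)) : j = k := by
  rcases lt_trichotomy j k with h | h | h
  · have : cc (j+1) ≤ cc k := cc_mono h
    omega
  · exact h
  · have : cc (k+1) ≤ cc j := cc_mono h
    omega

lemma Gset_disjoint : Gset 1 ⊆ (Gset 0)ᶜ := by
  rintro n ⟨j, hj, hj1, hj2⟩ ⟨k, hk, hk1, hk2⟩
  have := block_unique hj1 hj2 hk1 hk2
  omega

/-- ncard of `Set.Ioc` in ℕ. -/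
lemma ncard_Ioc (a b : ℕ) : (Set.Ioc a b).ncard = b - a := by
  rw [← Finset.coe_Ioc, Set.ncard_coe_finset, Nat.card_Ioc]

lemma ncard_Icc_one (b : ℕ) : (Set.Icc 1 b).ncard = b := by
  rw [← Finset.coe_Icc, Set.ncard_coe_finset, Nat.card_Icc]; omega

/-- Lower bound on `lam` at the end of a block of parity `p`. -/
lemma lam_lower {p j : ℕ} (hj : j % 2 = p) :
    (1 : ℝ) / 2 ≤ lam (2 * cc j) (Aset p) := by
  have hc1 : 1 ≤ cc j := one_le_cc j
  have hsub : Set.Ioc (cc j) (2 * cc j) ⊆ Aset p ∩ Set.Icc 1 (2 * cc j) := by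
    rintro x ⟨h1, h2⟩
    exact ⟨⟨j, hj, h1, h2⟩, by omega, h2⟩
  have hfin : (Aset p ∩ Set.Icc 1 (2 * cc j)).Finite :=
    (Set.finite_Icc 1 (2 * cc j)).subset Set.inter_subset_right
  have hcard : cc j ≤ (Aset p ∩ Set.Icc 1 (2 * cc j)).ncard := by
    have := Set.ncard_le_ncard hsub hfin
    rw [ncard_Ioc] at this
    omega
  have hpos : (0 : ℝ) < (2 * cc j : ℕ) := by
    have : (1:ℕ) ≤ 2 * cc j := by omega
    exact_mod_cast Nat.lt_of_lt_of_le Nat.zero_lt_one this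
  rw [lam, le_div_iff₀ hpos]
  have h1 : (cc j : ℝ) ≤ ((Aset p ∩ Set.Icc 1 (2 * cc j)).ncard : ℝ) := by
    exact_mod_cast hcard
  have h2 : ((2 * cc j : ℕ) : ℝ) = 2 * (cc j : ℝ) := by push_cast; ring
  rw [h2]
  linarith

/-- `Aset p` is not density zero. -/
lemma Aset_not_Zstat {p : ℕ} (hp : p ≤ 1) : Aset p ∉ Zstat := by
  intro h
  have h2 : ∀ᶠ n in atTop, lam n (Aset p) < 1 / 2 :=
    h.eventually_lt_const (by norm_num)
  rw [eventually_atTop] at h2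
  obtain ⟨N, hN⟩ := h2
  set j := p + 2 * N with hjdef
  have hj : j % 2 = p := by omega
  have hge : N ≤ 2 * cc j := by
    have := lt_cc j
    omega
  have := hN (2 * cc j) hge
  have := lam_lower hj
  linarith

lemma cc_ratio {J j : ℕ} (hJ : 1 ≤ J) (hj : J ≤ j) :
    cc (j - 1) * 4 ^ J ≤ cc j := by
  obtain ⟨m, rfl⟩ : ∃ m, j = m + 1 := ⟨j - 1, by omega⟩
  simp only [Nat.add_sub_cancel, cc, ← pow_add]
  apply Nat.pow_le_pow_right (by norm_num)
  nlinarith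

/-- Key upper bound: on a block of the wrong parity, `lam` is small. -/
lemma lam_upper {p J j n : ℕ} (hJ : 1 ≤ J) (hj1 : cc j ≤ n) (hj2 : n < cc (j + 1))
    (hjJ : J ≤ j) (hpar : j % 2 ≠ p) :
    lam n (Aset p) ≤ 2 / 4 ^ J := by
  have hsub : Aset p ∩ Set.Icc 1 n ⊆ Set.Icc 1 (2 * cc (j - 1)) := by
    rintro x ⟨⟨i, hi, hi1, hi2⟩, hx1, hx2⟩
    have hij : i < j + 1 := by
      by_contra h
      push_neg at h
      have : cc (j + 1) ≤ cc i := cc_mono h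
      omega
    have hij' : i ≠ j := fun h => hpar (h ▸ hi)
    have hile : i ≤ j - 1 := by omega
    have : cc i ≤ cc (j - 1) := cc_mono hile
    exact ⟨hx1, by omega⟩
  have hcard : (Aset p ∩ Set.Icc 1 n).ncard ≤ 2 * cc (j - 1) := by
    have := Set.ncard_le_ncard hsub (Set.finite_Icc _ _)
    rwa [ncard_Icc_one] at this
  have hn1 : 1 ≤ n := le_trans (one_le_cc j) hj1
  have hnpos : (0 : ℝ) < n := by exact_mod_cast hn1
  have hccpos : (0 : ℝ) < cc j := by exact_mod_cast Nat.lt_of_lt_of_le Nat.zero_lt_one (one_le_cc j)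
  have h4pos : (0 : ℝ) < 4 ^ J := by positivity
  have hcastcard : ((Aset p ∩ Set.Icc 1 n).ncard : ℝ) ≤ 2 * (cc (j - 1) : ℝ) := by
    exact_mod_cast hcard
  have hratio : ((cc (j - 1) : ℕ) : ℝ) * 4 ^ J ≤ (cc j : ℝ) := by
    exact_mod_cast cc_ratio hJ hjJ
  have step1 : lam n (Aset p) ≤ (2 * (cc (j - 1) : ℝ)) / (cc j : ℝ) := by
    rw [lam]
    apply div_le_div₀ (by positivity) hcastcard hccpos
    exact_mod_cast hj1
  have step2 : (2 * (cc (j - 1) : ℝ)) / (cc j : ℝ) ≤ 2 / 4 ^ J := by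
    rw [div_le_div_iff₀ hccpos h4pos]
    nlinarith
  linarith

theorem stmt_10 (I : Set (Set ℕ)) (hI : IsProperIdeal I)
    (hmax : ∀ A : Set ℕ, A ∈ I ∨ Aᶜ ∈ I) :
    Jlam I ≠ Zstat := by
  obtain ⟨⟨hfin, hsubI, hun⟩, hproper⟩ := hI
  -- choose a parity p with Gset p ∈ I
  obtain ⟨p, hp, hGp⟩ : ∃ p, p ≤ 1 ∧ Gset p ∈ I := by
    rcases hmax (Gset 0) with h | h
    · exact ⟨0, by norm_num, h⟩
    · exact ⟨1, le_refl 1, hsubI Gset_disjoint h⟩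
  have hAJ : Aset p ∈ Jlam I := by
    intro ε hε
    -- choose J with 2 / 4^J < ε
    obtain ⟨J0, hJ0⟩ : ∃ J0 : ℕ, 2 / ε < 4 ^ J0 :=
      pow_unbounded_of_one_lt _ (by norm_num)
    set J := J0 + 1 with hJdef
    have hJ1 : 1 ≤ J := by omega
    have h4 : (2 : ℝ) / ε < 4 ^ J := by
      calc (2:ℝ)/ε < 4 ^ J0 := hJ0
      _ ≤ 4 ^ J := by
          apply pow_le_pow_right₀ (by norm_num)
          omega
    have hsmall : (2 : ℝ) / 4 ^ J < ε := by
      have h4pos : (0:ℝ) < 4 ^ J := by positivity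
      rw [div_lt_iff₀ h4pos]
      rw [div_lt_iff₀ hε] at h4
      linarith
    have hsubset : {n : ℕ | ε ≤ lam n (Aset p)} ⊆ Set.Icc 0 (cc J) ∪ Gset p := by
      intro n hn
      simp only [Set.mem_setOf_eq] at hn
      by_cases hle : n ≤ cc J
      · exact Or.inl ⟨Nat.zero_le _, hle⟩
      · push_neg at hle
        have hn1 : 1 ≤ n := le_trans (one_le_cc J) (le_of_lt hle)
        obtain ⟨j, hj1, hj2⟩ := exists_block n hn1
        have hjJ : J ≤ j := by
          by_contra h
          push_neg at h
          have : cc (j + 1) ≤ cc J := cc_mono (by omega)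
          omega
        by_cases hpar : j % 2 = p
        · exact Or.inr ⟨j, hpar, hj1, hj2⟩
        · exfalso
          have := lam_upper hJ1 hj1 hj2 hjJ hpar
          linarith
    exact hsubI hsubset (hun (hfin _ (Set.finite_Icc 0 (cc J))) hGp)
  intro heq
  rw [heq] at hAJ
  exact Aset_not_Zstat hp hAJ
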